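/- Let h ∈ S(ℝᵈ×ℝ) satisfy ∫_ℝ h(z,s) ds = 0 for every z ∈ ℝᵈ. Then the function f₁(z,t) = ∫_{−∞}^{t} h(z,s) ds belongs to S(ℝᵈ×ℝ); moreover, for every p ∈ ℕ there exist q ∈ ℕ and C > 0, independent of h, such that ‖f₁‖_{(p,ℝ^{d+1})} ≤ C ‖h‖_{(q,ℝ^{d+1})} for all such h; in particular the map h ↦ f₁ is linear and continuous on the subspace of Schwartz functions with vanishing integral in the last variable. -/

import Mathlib

open MeasureTheory SchwartzMap Real Set

namespace Stmt12Aux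

variable {E : Type} [NormedAddCommGroup E] [NormedSpace ℝ E]
variable {F : Type} [NormedAddCommGroup F] [NormedSpace ℝ F] [CompleteSpace F]
variable {G : Type} [NormedAddCommGroup G] [NormedSpace ℝ G] [CompleteSpace G]

set_option linter.unusedSectionVars false
set_option maxHeartbeats 1000000
set_option synthInstance.maxHeartbeats 400000

noncomputable def aI (f : 𝓢(E × ℝ, F)) : E × ℝ → F := fun w => ∫ s in Set.Iic w.2, f (w.1, s)

def VI (f : 𝓢(E × ℝ, F)) : Prop := ∀ z : E, (∫ s : ℝ, f (z, s)) = 0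

noncomputable def SN (m : ℕ) (f : 𝓢(E × ℝ, F)) : ℝ :=
  (Finset.Iic (m, m)).sup (fun mm => SchwartzMap.seminorm ℝ mm.1 mm.2) f

lemma SN_nonneg (m : ℕ) (f : 𝓢(E × ℝ, F)) : 0 ≤ SN m f := apply_nonneg _ f

lemma SN_mono {m m' : ℕ} (h : m ≤ m') (f : 𝓢(E × ℝ, F)) : SN m f ≤ SN m' f :=
  Seminorm.le_def.mp (Finset.sup_mono (Finset.Iic_subset_Iic.mpr (Prod.mk_le_mk.mpr ⟨h, h⟩))) f

lemma decay_SN {k n m : ℕ} (hk : k ≤ m) (hn : n ≤ m) (f : 𝓢(E × ℝ, F)) (x : E × ℝ) :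
    (1 + ‖x‖) ^ k * ‖iteratedFDeriv ℝ n (⇑f) x‖ ≤ 2 ^ m * SN m f :=
  SchwartzMap.one_add_le_sup_seminorm_apply (m := (m, m)) hk hn f x

lemma norm_le_aux (k : ℕ) (f : 𝓢(E × ℝ, F)) (x : E × ℝ) :
    (1 + ‖x‖) ^ k * ((1 + x.2 ^ 2) * ‖f x‖) ≤ 2 ^ (k + 2) * SN (k + 2) f := by
  have habs : |x.2| ≤ ‖x‖ := by
    simpa [Real.norm_eq_abs] using norm_snd_le x
  have h1 : (1 + x.2 ^ 2) ≤ (1 + ‖x‖) ^ 2 := by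
    nlinarith [abs_nonneg x.2, sq_abs x.2, norm_nonneg x]
  calc (1 + ‖x‖) ^ k * ((1 + x.2 ^ 2) * ‖f x‖)
      ≤ (1 + ‖x‖) ^ k * ((1 + ‖x‖) ^ 2 * ‖f x‖) := by
        have := norm_nonneg (f x); gcongr
    _ = (1 + ‖x‖) ^ (k + 2) * ‖iteratedFDeriv ℝ 0 (⇑f) x‖ := by
        rw [norm_iteratedFDeriv_zero, pow_add]; ring
    _ ≤ 2 ^ (k + 2) * SN (k + 2) f := decay_SN le_rfl (by omega) f x

lemma cont_line (f : 𝓢(E × ℝ, F)) (z : E) : Continuous (fun s : ℝ => f (z, s)) :=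
  f.continuous.comp (continuous_const.prodMk continuous_id)

lemma integrable_line (f : 𝓢(E × ℝ, F)) (z : E) : Integrable (fun s : ℝ => f (z, s)) := by
  refine Integrable.mono' ((integrable_inv_one_add_sq).const_mul (2 ^ 2 * SN 2 f))
    ((cont_line f z).aestronglyMeasurable) (Filter.Eventually.of_forall fun s => ?_)
  have h := norm_le_aux (E := E) 0 f (z, s)
  rw [pow_zero, one_mul] at h
  have hpos : (0:ℝ) < 1 + s ^ 2 := by positivity
  calc ‖f (z, s)‖ = ((1 + s ^ 2) * ‖f (z, s)‖) / (1 + s ^ 2) := by field_simp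
    _ ≤ (2 ^ 2 * SN 2 f) / (1 + s ^ 2) := by
        gcongr
    _ = 2 ^ 2 * SN 2 f * (1 + s ^ 2)⁻¹ := div_eq_mul_inv _ _

lemma If_decay (k : ℕ) (f : 𝓢(E × ℝ, F)) (hf : VI f) (x : E × ℝ) :
    (1 + ‖x‖) ^ k * ‖aI f x‖ ≤ (π * 2 ^ (k + 2)) * SN (k + 2) f := by
  obtain ⟨z, t⟩ := x
  set B := (2:ℝ) ^ (k + 2) * SN (k + 2) f with hB
  have hSN := SN_nonneg (k + 2) f
  have hB0 : 0 ≤ B := by positivity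
  have main : ∀ S : Set ℝ, MeasurableSet S → (∀ s ∈ S, |t| ≤ |s|) →
      (1 + ‖((z, t) : E × ℝ)‖) ^ k * ‖∫ s in S, f (z, s)‖ ≤ π * B := by
    intro S hS hle
    have h3 : ∀ s ∈ S, (1 + ‖((z, t) : E × ℝ)‖) ^ k * ‖f (z, s)‖ ≤ B * (1 + s ^ 2)⁻¹ := by
      intro s hs
      have hzs : ‖((z, t) : E × ℝ)‖ ≤ ‖((z, s) : E × ℝ)‖ := by
        simp only [Prod.norm_def, Real.norm_eq_abs]
        exact max_le_max le_rfl (hle s hs)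
      have h := norm_le_aux k f (z, s)
      have hpos : (0:ℝ) < 1 + s ^ 2 := by positivity
      rw [← div_eq_mul_inv, le_div_iff₀ hpos]
      calc (1 + ‖((z, t) : E × ℝ)‖) ^ k * ‖f (z, s)‖ * (1 + s ^ 2)
          = (1 + ‖((z, t) : E × ℝ)‖) ^ k * ((1 + s ^ 2) * ‖f (z, s)‖) := by ring
        _ ≤ (1 + ‖((z, s) : E × ℝ)‖) ^ k * ((1 + s ^ 2) * ‖f (z, s)‖) := by
            have h02 : (1 + ‖((z,t) : E × ℝ)‖) ^ k ≤ (1 + ‖((z,s) : E × ℝ)‖) ^ k := by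
              gcongr
            exact mul_le_mul_of_nonneg_right h02 (by positivity)
        _ ≤ B := h
    have hInt1 : IntegrableOn (fun s => (1 + ‖((z, t) : E × ℝ)‖) ^ k * ‖f (z, s)‖) S :=
      (((integrable_line f z).norm.const_mul _)).integrableOn
    have hInt2 : IntegrableOn (fun s : ℝ => B * (1 + s ^ 2)⁻¹) S :=
      ((integrable_inv_one_add_sq).const_mul B).integrableOn
    calc (1 + ‖((z, t) : E × ℝ)‖) ^ k * ‖∫ s in S, f (z, s)‖
        ≤ (1 + ‖((z, t) : E × ℝ)‖) ^ k * ∫ s in S, ‖f (z, s)‖ :=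
          mul_le_mul_of_nonneg_left
            (norm_integral_le_integral_norm (μ := volume.restrict S) (fun s => f (z, s)))
            (by positivity)
      _ = ∫ s in S, (1 + ‖((z, t) : E × ℝ)‖) ^ k * ‖f (z, s)‖ := (MeasureTheory.integral_const_mul _ _).symm
      _ ≤ ∫ s in S, B * (1 + s ^ 2)⁻¹ := setIntegral_mono_on hInt1 hInt2 hS h3
      _ ≤ ∫ s : ℝ, B * (1 + s ^ 2)⁻¹ := by
          refine setIntegral_le_integral ((integrable_inv_one_add_sq).const_mul B) ?_
          refine Filter.Eventually.of_forall fun s => ?_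
          positivity
      _ = B * π := by rw [MeasureTheory.integral_const_mul, integral_univ_inv_one_add_sq]
      _ = π * B := mul_comm _ _
  rcases le_total t 0 with ht | ht
  · have := main (Set.Iic t) measurableSet_Iic (fun s hs => by
      rw [Set.mem_Iic] at hs
      rw [abs_of_nonpos ht, abs_of_nonpos (hs.trans ht)]; linarith)
    simpa [aI, hB, mul_assoc] using this
  · have heq : (∫ s in Set.Iic t, f (z, s)) = - ∫ s in Set.Ioi t, f (z, s) := by
      have h := integral_add_compl (measurableSet_Iic (a := t)) (integrable_line f z)
      rw [Set.compl_Iic, hf z] at h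
      exact eq_neg_of_add_eq_zero_left h
    have := main (Set.Ioi t) measurableSet_Ioi (fun s hs => by
      rw [Set.mem_Ioi] at hs
      rw [abs_of_nonneg ht, abs_of_nonneg (ht.trans hs.le)]; exact hs.le)
    calc (1 + ‖((z, t) : E × ℝ)‖) ^ k * ‖aI f (z, t)‖
        = (1 + ‖((z, t) : E × ℝ)‖) ^ k * ‖∫ s in Set.Ioi t, f (z, s)‖ := by
          simp only [aI]; rw [heq, norm_neg]
      _ ≤ π * B := this
      _ = (π * 2 ^ (k + 2)) * SN (k + 2) f := by rw [hB]; ring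


/-- Postcomposition with a fixed continuous linear map, as a CLM on Schwartz space. -/
noncomputable def pcCLM (c : F →L[ℝ] G) : 𝓢(E × ℝ, F) →L[ℝ] 𝓢(E × ℝ, G) :=
  SchwartzMap.bilinLeftCLM ((ContinuousLinearMap.lsmul ℝ ℝ : ℝ →L[ℝ] G →L[ℝ] G).flip.comp c)
    (Function.HasTemperateGrowth.const (1 : ℝ))

lemma pcCLM_apply (c : F →L[ℝ] G) (f : 𝓢(E × ℝ, F)) (x : E × ℝ) :
    pcCLM c f x = c (f x) := one_smul ℝ _

noncomputable def DzCLM : 𝓢(E × ℝ, F) →L[ℝ] 𝓢(E × ℝ, (E × ℝ) →L[ℝ] F) :=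
  (pcCLM ((ContinuousLinearMap.compL ℝ (E × ℝ) (E × ℝ) F).flip
      ((ContinuousLinearMap.inl ℝ E ℝ).comp (ContinuousLinearMap.fst ℝ E ℝ)))).comp
    (SchwartzMap.fderivCLM ℝ _ _)

lemma DzCLM_apply (f : 𝓢(E × ℝ, F)) (x : E × ℝ) (v : E × ℝ) :
    DzCLM f x v = fderiv ℝ (⇑f) x (v.1, 0) := by
  simp only [DzCLM, ContinuousLinearMap.comp_apply, pcCLM_apply]
  rw [SchwartzMap.fderivCLM_apply]
  rfl

noncomputable def KCLM : 𝓢(E × ℝ, F) →L[ℝ] 𝓢(E × ℝ, (E × ℝ) →L[ℝ] F) :=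
  pcCLM (ContinuousLinearMap.smulRightL ℝ (E × ℝ) F (ContinuousLinearMap.snd ℝ E ℝ))

lemma KCLM_apply (f : 𝓢(E × ℝ, F)) (x : E × ℝ) :
    KCLM f x = (ContinuousLinearMap.snd ℝ E ℝ).smulRight (f x) := pcCLM_apply _ f x

lemma clm_bound (T : 𝓢(E × ℝ, F) →L[ℝ] 𝓢(E × ℝ, G)) (m : ℕ) :
    ∃ (m' : ℕ) (C : ℝ), 0 < C ∧ ∀ f, SN m (T f) ≤ C * SN m' f := by
  have hsup : Continuous ⇑((Finset.Iic (m, m)).sup (schwartzSeminormFamily ℝ (E × ℝ) G)) := by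
    refine Seminorm.continuous_of_le ?_ (Seminorm.finset_sup_le_sum _ _)
    change Continuous fun x => FunLike.coeAddMonoidHom _ _ _
      (∑ i ∈ Finset.Iic (m, m), schwartzSeminormFamily ℝ (E × ℝ) G i) x
    simp_rw [map_sum, Finset.sum_apply]
    exact continuous_finset_sum _ fun i _ =>
      (schwartz_withSeminorms ℝ (E × ℝ) G).continuous_seminorm i
  set q : Seminorm ℝ 𝓢(E × ℝ, F) :=
    ((Finset.Iic (m, m)).sup (schwartzSeminormFamily ℝ (E × ℝ) G)).comp
      (T : 𝓢(E × ℝ, F) →ₗ[ℝ] 𝓢(E × ℝ, G)) with hq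
  have hqc : Continuous ⇑q := by
    have : ⇑q = (⇑((Finset.Iic (m, m)).sup (schwartzSeminormFamily ℝ (E × ℝ) G))) ∘ ⇑T := rfl
    rw [this]
    exact hsup.comp T.continuous
  obtain ⟨s, C, hC0, hCle⟩ :=
    Seminorm.bound_of_continuous (schwartz_withSeminorms ℝ (E × ℝ) F) q hqc
  refine ⟨s.sup (fun ab => max ab.1 ab.2), C, ?_, fun f => ?_⟩
  · exact_mod_cast zero_lt_iff.mpr hC0
  · have h1 : SN m (T f) = q f := rfl
    have h2 := hCle f
    rw [h1]
    refine h2.trans ?_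
    have h3 : (s.sup (schwartzSeminormFamily ℝ (E × ℝ) F)) f ≤
        SN (s.sup (fun ab => max ab.1 ab.2)) f := by
      refine Seminorm.le_def.mp (Finset.sup_mono ?_) f
      intro ab hab
      rw [Finset.mem_Iic, Prod.le_def]
      have hle := Finset.le_sup (f := fun ab : ℕ × ℕ => max ab.1 ab.2) hab
      exact ⟨le_trans (le_max_left ab.1 ab.2) hle, le_trans (le_max_right ab.1 ab.2) hle⟩
    calc (C • s.sup (schwartzSeminormFamily ℝ (E × ℝ) F)) f
        = (C : ℝ) * (s.sup (schwartzSeminormFamily ℝ (E × ℝ) F)) f := rfl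
      _ ≤ (C : ℝ) * SN (s.sup (fun ab => max ab.1 ab.2)) f := by
          exact mul_le_mul_of_nonneg_left h3 (by positivity)


lemma one_add_sq_le (x : E × ℝ) : 1 + x.2 ^ 2 ≤ (1 + ‖x‖) ^ 2 := by
  have habs : |x.2| ≤ ‖x‖ := by simpa [Real.norm_eq_abs] using norm_snd_le x
  nlinarith [abs_nonneg x.2, sq_abs x.2, norm_nonneg x]

lemma seg_norm_le {y x u : E × ℝ} (hu : u ∈ segment ℝ y x) : ‖u - y‖ ≤ ‖x - y‖ := by
  obtain ⟨a, b, ha, hb, hab, rfl⟩ := hu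
  have h : a • y + b • x - y = b • (x - y) := by
    have hba : a = 1 - b := by linarith
    rw [hba]; module
  rw [h, norm_smul, Real.norm_eq_abs, abs_of_nonneg hb]
  have hb1 : b ≤ 1 := by linarith
  nlinarith [norm_nonneg (x - y)]

lemma seg_snd {y x u : E × ℝ} (h : x.2 = y.2) (hu : u ∈ segment ℝ y x) : u.2 = y.2 := by
  obtain ⟨a, b, ha, hb, hab, rfl⟩ := hu
  have : (a • y + b • x).2 = a * y.2 + b * x.2 := rfl
  rw [this, h]
  linear_combination y.2 * hab

lemma norm_fderiv_eq (g : E × ℝ → F) (u : E × ℝ) :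
    ‖fderiv ℝ g u‖ = ‖iteratedFDeriv ℝ 1 g u‖ := by
  calc ‖fderiv ℝ g u‖ = ‖iteratedFDeriv ℝ 0 (fderiv ℝ g) u‖ := norm_iteratedFDeriv_zero.symm
    _ = ‖iteratedFDeriv ℝ (0 + 1) g u‖ := norm_iteratedFDeriv_fderiv
    _ = ‖iteratedFDeriv ℝ 1 g u‖ := rfl

lemma norm_fderiv2_eq (g : E × ℝ → F) (u : E × ℝ) :
    ‖fderiv ℝ (fderiv ℝ g) u‖ = ‖iteratedFDeriv ℝ 2 g u‖ := by
  calc ‖fderiv ℝ (fderiv ℝ g) u‖ = ‖iteratedFDeriv ℝ 1 (fderiv ℝ g) u‖ := norm_fderiv_eq _ _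
    _ = ‖iteratedFDeriv ℝ (1 + 1) g u‖ := norm_iteratedFDeriv_fderiv
    _ = ‖iteratedFDeriv ℝ 2 g u‖ := rfl

lemma fderiv_bound (f : 𝓢(E × ℝ, F)) (u : E × ℝ) : ‖fderiv ℝ (⇑f) u‖ ≤ 2 * SN 1 f := by
  have h := decay_SN (k := 0) (n := 1) (m := 1) (Nat.zero_le _) le_rfl f u
  rw [pow_zero, one_mul] at h
  rw [norm_fderiv_eq]
  calc ‖iteratedFDeriv ℝ 1 (⇑f) u‖ ≤ 2 ^ 1 * SN 1 f := h
    _ = 2 * SN 1 f := by norm_num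

lemma fderiv2_bound (f : 𝓢(E × ℝ, F)) (u : E × ℝ) :
    (1 + u.2 ^ 2) * ‖fderiv ℝ (fderiv ℝ (⇑f)) u‖ ≤ 2 ^ 2 * SN 2 f := by
  have h := decay_SN (k := 2) (n := 2) (m := 2) le_rfl le_rfl f u
  rw [← norm_fderiv2_eq] at h
  have h1 := one_add_sq_le u
  nlinarith [norm_nonneg (fderiv ℝ (fderiv ℝ (⇑f)) u), norm_nonneg u, sq_nonneg u.2]

lemma fderiv_eq_fderivCLM (f : 𝓢(E × ℝ, F)) :
    fderiv ℝ (⇑f) = ⇑(SchwartzMap.fderivCLM ℝ _ _ f) :=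
  funext fun u => (SchwartzMap.fderivCLM_apply (𝕜 := ℝ) f u).symm

lemma taylor_aux (f : 𝓢(E × ℝ, F)) {x y : E × ℝ} {M : ℝ}
    (hM : ∀ u ∈ segment ℝ y x, ‖fderiv ℝ (fderiv ℝ (⇑f)) u‖ ≤ M) :
    ‖f x - f y - (fderiv ℝ (⇑f) y) (x - y)‖ ≤ M * ‖x - y‖ * ‖x - y‖ := by
  have hseg : Convex ℝ (segment ℝ y x) := convex_segment _ _
  have hM0 : 0 ≤ M := le_trans (norm_nonneg (fderiv ℝ (fderiv ℝ (⇑f)) y)) (hM y (left_mem_segment ℝ y x))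
  have hdf : Differentiable ℝ (fderiv ℝ (⇑f)) := by
    rw [fderiv_eq_fderivCLM f]; exact (SchwartzMap.fderivCLM ℝ _ _ f).differentiable
  have hinner : ∀ u ∈ segment ℝ y x,
      ‖fderiv ℝ (⇑f) u - fderiv ℝ (⇑f) y‖ ≤ M * ‖x - y‖ := by
    intro u hu
    have h := hseg.norm_image_sub_le_of_norm_hasFDerivWithin_le
      (f' := fun v => fderiv ℝ (fderiv ℝ (⇑f)) v)
      (fun v _ => (hdf v).hasFDerivAt.hasFDerivWithinAt) hM
      (left_mem_segment ℝ y x) hu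
    exact h.trans (mul_le_mul_of_nonneg_left (seg_norm_le hu) hM0)
  have houter := hseg.norm_image_sub_le_of_norm_hasFDerivWithin_le'
    (f' := fun v => fderiv ℝ (⇑f) v) (φ := fderiv ℝ (⇑f) y)
    (fun v _ => (f.differentiable v).hasFDerivAt.hasFDerivWithinAt) hinner
    (left_mem_segment ℝ y x) (right_mem_segment ℝ y x)
  calc ‖f x - f y - (fderiv ℝ (⇑f) y) (x - y)‖ ≤ M * ‖x - y‖ * ‖x - y‖ := houter



lemma hasFDerivAt_aI (f : 𝓢(E × ℝ, F)) (x₀ : E × ℝ) :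
    HasFDerivAt (aI f)
      (aI (DzCLM f) x₀ + (ContinuousLinearMap.snd ℝ E ℝ).smulRight (f x₀)) x₀ := by
  obtain ⟨z₀, t₀⟩ := x₀
  set L : (E × ℝ) →L[ℝ] F :=
    aI (DzCLM f) (z₀, t₀) + (ContinuousLinearMap.snd ℝ E ℝ).smulRight (f (z₀, t₀)) with hL
  have hSN1 := SN_nonneg 1 f
  have hSN2 := SN_nonneg 2 f
  set Ktot : ℝ := 2 ^ 2 * SN 2 f * π + 2 * SN 1 f with hKdef
  have key : ∀ w : E × ℝ, ‖aI f w - aI f (z₀, t₀) - L (w - (z₀, t₀))‖ ≤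
      Ktot * (‖w - (z₀, t₀)‖ * ‖w - (z₀, t₀)‖) := by
    rintro ⟨z, t⟩
    have hfz : Integrable (fun s => f (z, s)) := integrable_line f z
    have hfz0 : Integrable (fun s => f (z₀, s)) := integrable_line f z₀
    have hDint : Integrable (fun s => DzCLM f (z₀, s)) := integrable_line (DzCLM f) z₀
    have hder_int : Integrable (fun s => fderiv ℝ (⇑f) (z₀, s) (z - z₀, 0)) := by
      have h := hDint.apply_continuousLinearMap ((z - z₀, 0) : E × ℝ)
      simpa only [DzCLM_apply] using h
    have hLapp : L ((z, t) - (z₀, t₀)) =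
        (∫ s in Iic t₀, fderiv ℝ (⇑f) (z₀, s) (z - z₀, 0)) + (t - t₀) • f (z₀, t₀) := by
      rw [hL]
      rw [ContinuousLinearMap.add_apply, ContinuousLinearMap.smulRight_apply]
      congr 1
      · show (aI (DzCLM f) (z₀, t₀)) ((z, t) - (z₀, t₀)) = _
        rw [show aI (DzCLM f) (z₀, t₀) = ∫ s in Iic t₀, DzCLM f (z₀, s) from rfl]
        rw [ContinuousLinearMap.integral_apply hDint.integrableOn]
        refine integral_congr_ae (Filter.Eventually.of_forall fun s => ?_)
        simp [DzCLM_apply]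
    have h3 : (∫ s in Iic t, f (z, s)) - (∫ s in Iic t₀, f (z, s))
        = ∫ s in t₀..t, f (z, s) :=
      intervalIntegral.integral_Iic_sub_Iic hfz.integrableOn hfz.integrableOn
    have heq : aI f (z, t) - aI f (z₀, t₀) - L ((z, t) - (z₀, t₀))
        = (∫ s in Iic t₀, (f (z, s) - f (z₀, s) - fderiv ℝ (⇑f) (z₀, s) (z - z₀, 0)))
          + (∫ s in t₀..t, (f (z, s) - f (z₀, t₀))) := by
      rw [hLapp]
      have ha : Integrable (fun s => f (z, s) - f (z₀, s)) (volume.restrict (Iic t₀)) :=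
        hfz.integrableOn.sub hfz0.integrableOn
      have h1a : (∫ s in Iic t₀, (f (z, s) - f (z₀, s) - fderiv ℝ (⇑f) (z₀, s) (z - z₀, 0)))
          = (∫ s in Iic t₀, (f (z, s) - f (z₀, s)))
            - ∫ s in Iic t₀, fderiv ℝ (⇑f) (z₀, s) (z - z₀, 0) :=
        integral_sub ha hder_int.integrableOn
      have h1b : (∫ s in Iic t₀, (f (z, s) - f (z₀, s)))
          = (∫ s in Iic t₀, f (z, s)) - ∫ s in Iic t₀, f (z₀, s) :=
        integral_sub hfz.integrableOn hfz0.integrableOn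
      have h1 := h1a.trans (by rw [h1b])
      have h2 : (∫ s in t₀..t, (f (z, s) - f (z₀, t₀)))
          = (∫ s in t₀..t, f (z, s)) - (t - t₀) • f (z₀, t₀) := by
        rw [intervalIntegral.integral_sub ((cont_line f z).intervalIntegrable _ _)
          intervalIntegrable_const, intervalIntegral.integral_const]
      rw [h1, h2]
      show (∫ s in Iic t, f (z, s)) - (∫ s in Iic t₀, f (z₀, s)) - _ = _
      rw [← h3]
      abel
    rw [heq]
    have hA : ‖∫ s in Iic t₀, (f (z, s) - f (z₀, s) - fderiv ℝ (⇑f) (z₀, s) (z - z₀, 0))‖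
        ≤ (2 ^ 2 * SN 2 f * (‖z - z₀‖ * ‖z - z₀‖)) * π := by
      set c : ℝ := 2 ^ 2 * SN 2 f * (‖z - z₀‖ * ‖z - z₀‖) with hc
      have hc0 : 0 ≤ c := by positivity
      have hptwise : ∀ s : ℝ,
          ‖f (z, s) - f (z₀, s) - fderiv ℝ (⇑f) (z₀, s) (z - z₀, 0)‖ ≤ c * (1 + s ^ 2)⁻¹ := by
        intro s
        have hs2 : ∀ u ∈ segment ℝ ((z₀, s) : E × ℝ) ((z, s) : E × ℝ),
            ‖fderiv ℝ (fderiv ℝ (⇑f)) u‖ ≤ (2 ^ 2 * SN 2 f) * (1 + s ^ 2)⁻¹ := by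
          intro u hu
          have hu2 : u.2 = s := seg_snd (x := ((z, s) : E × ℝ)) (y := ((z₀, s) : E × ℝ)) rfl hu
          have hb := fderiv2_bound f u
          rw [hu2] at hb
          have hpos : (0 : ℝ) < 1 + s ^ 2 := by positivity
          rw [← div_eq_mul_inv, le_div_iff₀ hpos]
          calc ‖fderiv ℝ (fderiv ℝ (⇑f)) u‖ * (1 + s ^ 2)
              = (1 + s ^ 2) * ‖fderiv ℝ (fderiv ℝ (⇑f)) u‖ := mul_comm _ _
            _ ≤ 2 ^ 2 * SN 2 f := hb
        have ht := taylor_aux f (x := ((z, s) : E × ℝ)) (y := ((z₀, s) : E × ℝ)) hs2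
        have hnorm : ‖((z, s) : E × ℝ) - ((z₀, s) : E × ℝ)‖ = ‖z - z₀‖ := by
          have e : ((z, s) : E × ℝ) - ((z₀, s) : E × ℝ) = (z - z₀, 0) := by
            rw [Prod.mk_sub_mk, sub_self]
          rw [e, Prod.norm_def, norm_zero]
          exact max_eq_left (norm_nonneg _)
        have e : ((z, s) : E × ℝ) - ((z₀, s) : E × ℝ) = (z - z₀, 0) := by
          rw [Prod.mk_sub_mk, sub_self]
        rw [hnorm, e] at ht
        calc ‖f (z, s) - f (z₀, s) - fderiv ℝ (⇑f) (z₀, s) (z - z₀, 0)‖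
            ≤ 2 ^ 2 * SN 2 f * (1 + s ^ 2)⁻¹ * ‖z - z₀‖ * ‖z - z₀‖ := ht
          _ = c * (1 + s ^ 2)⁻¹ := by rw [hc]; ring
      have hint_c : Integrable (fun s : ℝ => c * (1 + s ^ 2)⁻¹) :=
        integrable_inv_one_add_sq.const_mul c
      refine (norm_integral_le_of_norm_le hint_c.integrableOn
        (Filter.Eventually.of_forall fun s => hptwise s)).trans ?_
      calc (∫ s in Iic t₀, c * (1 + s ^ 2)⁻¹) ≤ ∫ s : ℝ, c * (1 + s ^ 2)⁻¹ :=
            setIntegral_le_integral hint_c (Filter.Eventually.of_forall fun s => by positivity)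
        _ = c * π := by rw [MeasureTheory.integral_const_mul, integral_univ_inv_one_add_sq]
        _ = (2 ^ 2 * SN 2 f * (‖z - z₀‖ * ‖z - z₀‖)) * π := by rw [hc]
    have hB : ‖∫ s in t₀..t, (f (z, s) - f (z₀, t₀))‖ ≤
        2 * SN 1 f * ‖((z, t) : E × ℝ) - (z₀, t₀)‖ * |t - t₀| := by
      have hbound : ∀ s ∈ Set.uIoc t₀ t, ‖f (z, s) - f (z₀, t₀)‖ ≤
          2 * SN 1 f * ‖((z, t) : E × ℝ) - (z₀, t₀)‖ := by
        intro s hs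
        have hlip := convex_univ.norm_image_sub_le_of_norm_hasFDerivWithin_le
          (f' := fun v => fderiv ℝ (⇑f) v)
          (fun v _ => (f.differentiable v).hasFDerivAt.hasFDerivWithinAt)
          (fun v _ => fderiv_bound f v) (mem_univ ((z₀, t₀) : E × ℝ))
          (mem_univ ((z, s) : E × ℝ))
        refine hlip.trans (mul_le_mul_of_nonneg_left ?_ (by positivity))
        have hst : |s - t₀| ≤ |t - t₀| := by
          have h1 := le_abs_self (t - t₀)
          have h2 := neg_abs_le (t - t₀)
          rcases Set.mem_uIoc.mp hs with ⟨ha, hb⟩ | ⟨ha, hb⟩ <;>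
            (rw [abs_le]; constructor <;> linarith)
        have e1 : ((z, s) : E × ℝ) - (z₀, t₀) = (z - z₀, s - t₀) := rfl
        have e2 : ((z, t) : E × ℝ) - (z₀, t₀) = (z - z₀, t - t₀) := rfl
        rw [e1, e2]
        simp only [Prod.norm_def, Real.norm_eq_abs]
        exact max_le_max le_rfl hst
      exact intervalIntegral.norm_integral_le_of_norm_le_const hbound
    refine (norm_add_le _ _).trans ((add_le_add hA hB).trans ?_)
    have h1 : ‖z - z₀‖ ≤ ‖((z, t) : E × ℝ) - (z₀, t₀)‖ :=
      norm_fst_le (((z, t) : E × ℝ) - (z₀, t₀))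
    have h2 : |t - t₀| ≤ ‖((z, t) : E × ℝ) - (z₀, t₀)‖ := by
      have h := norm_snd_le (((z, t) : E × ℝ) - (z₀, t₀))
      simpa [Real.norm_eq_abs] using h
    have hn0 : (0:ℝ) ≤ ‖((z, t) : E × ℝ) - (z₀, t₀)‖ := norm_nonneg _
    rw [hKdef]
    have e1 : 2 ^ 2 * SN 2 f * π * (‖z - z₀‖ * ‖z - z₀‖) ≤
        2 ^ 2 * SN 2 f * π * (‖((z, t) : E × ℝ) - (z₀, t₀)‖ * ‖((z, t) : E × ℝ) - (z₀, t₀)‖) :=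
      mul_le_mul_of_nonneg_left (mul_le_mul h1 h1 (norm_nonneg _) hn0) (by positivity)
    have e2 : 2 * SN 1 f * (‖((z, t) : E × ℝ) - (z₀, t₀)‖ * |t - t₀|) ≤
        2 * SN 1 f * (‖((z, t) : E × ℝ) - (z₀, t₀)‖ * ‖((z, t) : E × ℝ) - (z₀, t₀)‖) :=
      mul_le_mul_of_nonneg_left (mul_le_mul_of_nonneg_left h2 hn0) (by positivity)
    nlinarith [e1, e2]
  have hbig : (fun w => aI f w - aI f (z₀, t₀) - L (w - (z₀, t₀))) =O[nhds ((z₀, t₀) : E × ℝ)]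
      (fun w : E × ℝ => ‖w - (z₀, t₀)‖ * ‖w - (z₀, t₀)‖) := by
    refine Asymptotics.IsBigO.of_bound Ktot (Filter.Eventually.of_forall fun w => ?_)
    calc ‖aI f w - aI f (z₀, t₀) - L (w - (z₀, t₀))‖
        ≤ Ktot * (‖w - (z₀, t₀)‖ * ‖w - (z₀, t₀)‖) := key w
      _ = Ktot * ‖‖w - (z₀, t₀)‖ * ‖w - (z₀, t₀)‖‖ := by
          rw [Real.norm_eq_abs, abs_of_nonneg (by positivity)]
  have hlit : (fun w : E × ℝ => ‖w - (z₀, t₀)‖ * ‖w - (z₀, t₀)‖) =o[nhds ((z₀, t₀) : E × ℝ)]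
      (fun w : E × ℝ => w - (z₀, t₀)) := by
    rw [Asymptotics.isLittleO_iff]
    intro c hc
    filter_upwards [Metric.ball_mem_nhds ((z₀, t₀) : E × ℝ) hc] with w hw
    rw [Metric.mem_ball, dist_eq_norm] at hw
    have h0 : (0:ℝ) ≤ ‖w - (z₀, t₀)‖ := norm_nonneg _
    rw [Real.norm_eq_abs, abs_of_nonneg (by positivity)]
    nlinarith
  exact HasFDerivAt.of_isLittleO (hbig.trans_isLittleO hlit)

lemma fderiv_aI (f : 𝓢(E × ℝ, F)) : fderiv ℝ (aI f) =
    fun w => aI (DzCLM f) w + (ContinuousLinearMap.snd ℝ E ℝ).smulRight (f w) :=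
  funext fun w => (hasFDerivAt_aI f w).fderiv

lemma KCLM_coe (f : 𝓢(E × ℝ, F)) :
    ⇑(KCLM f) = fun w => (ContinuousLinearMap.snd ℝ E ℝ).smulRight (f w) :=
  funext fun w => KCLM_apply f w

lemma contDiff_aI : ∀ (n : ℕ) (F : Type) [NormedAddCommGroup F] [NormedSpace ℝ F]
    [CompleteSpace F] (f : 𝓢(E × ℝ, F)), ContDiff ℝ n (aI f) := by
  intro n
  induction n with
  | zero =>
    intro F _ _ _ f
    simp only [Nat.cast_zero, contDiff_zero]
    exact continuous_iff_continuousAt.mpr fun w =>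
      (hasFDerivAt_aI f w).differentiableAt.continuousAt
  | succ n ih =>
    intro F _ _ _ f
    simp only [Nat.cast_succ]
    rw [contDiff_succ_iff_fderiv]
    refine ⟨fun w => (hasFDerivAt_aI f w).differentiableAt, fun h => absurd h (by simp), ?_⟩
    rw [fderiv_aI]
    have hfe : (fun w => aI (DzCLM f) w + (ContinuousLinearMap.snd ℝ E ℝ).smulRight (f w))
        = fun w => aI (DzCLM f) w + (KCLM f) w := funext fun w => by rw [KCLM_apply]
    rw [hfe]
    exact (ih _ (DzCLM f)).add ((KCLM f).smooth n)

lemma VI_DzCLM {f : 𝓢(E × ℝ, F)} (hf : VI f) : VI (DzCLM f) := by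
  intro z
  have hDint : Integrable (fun s => DzCLM f (z, s)) := integrable_line (DzCLM f) z
  have hco : fderiv ℝ (⇑f) = ⇑(SchwartzMap.fderivCLM ℝ _ _ f) := fderiv_eq_fderivCLM f
  set F' : E → ℝ → (E →L[ℝ] F) :=
    fun y s => (fderiv ℝ (⇑f) (y, s)).comp (ContinuousLinearMap.inl ℝ E ℝ) with hF'
  have hinl : ‖(ContinuousLinearMap.inl ℝ E ℝ : E →L[ℝ] E × ℝ)‖ ≤ 1 := by
    refine ContinuousLinearMap.opNorm_le_bound _ zero_le_one fun v => ?_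
    rw [one_mul]
    have : ‖((v, 0) : E × ℝ)‖ = ‖v‖ := by
      rw [Prod.norm_def, norm_zero]; exact max_eq_left (norm_nonneg _)
    simpa [ContinuousLinearMap.inl_apply] using le_of_eq this
  have hFbound : ∀ (y : E) (s : ℝ), ‖F' y s‖ ≤
      2 ^ 2 * SN 2 (SchwartzMap.fderivCLM ℝ _ _ f) * (1 + s ^ 2)⁻¹ := by
    intro y s
    have h1 : ‖F' y s‖ ≤ ‖fderiv ℝ (⇑f) (y, s)‖ := by
      refine (ContinuousLinearMap.opNorm_comp_le _ _).trans ?_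
      calc ‖fderiv ℝ (⇑f) (y, s)‖ * ‖(ContinuousLinearMap.inl ℝ E ℝ : E →L[ℝ] E × ℝ)‖
          ≤ ‖fderiv ℝ (⇑f) (y, s)‖ * 1 :=
            mul_le_mul_of_nonneg_left hinl (norm_nonneg _)
        _ = ‖fderiv ℝ (⇑f) (y, s)‖ := mul_one _
    have h2 := norm_le_aux 0 (SchwartzMap.fderivCLM ℝ _ _ f) (y, s)
    rw [pow_zero, one_mul] at h2
    have hpos : (0 : ℝ) < 1 + s ^ 2 := by positivity
    rw [← div_eq_mul_inv, le_div_iff₀ hpos]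
    calc ‖F' y s‖ * (1 + s ^ 2) ≤ ‖fderiv ℝ (⇑f) (y, s)‖ * (1 + s ^ 2) :=
          mul_le_mul_of_nonneg_right h1 hpos.le
      _ = (1 + s ^ 2) * ‖(SchwartzMap.fderivCLM ℝ _ _ f) (y, s)‖ := by
          rw [hco, mul_comm]
      _ ≤ 2 ^ 2 * SN 2 (SchwartzMap.fderivCLM ℝ _ _ f) := h2
  have hF'int : Integrable (F' z) := by
    refine Integrable.mono' ((integrable_inv_one_add_sq).const_mul
      (2 ^ 2 * SN 2 (SchwartzMap.fderivCLM ℝ _ _ f)))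
      ?_ (Filter.Eventually.of_forall fun s => hFbound z s)
    have hc : Continuous (F' z) := by
      have : Continuous fun s : ℝ => (SchwartzMap.fderivCLM ℝ _ _ f) (z, s) :=
        cont_line (SchwartzMap.fderivCLM ℝ _ _ f) z
      have h2 : Continuous fun u : (E × ℝ) →L[ℝ] F =>
          u.comp (ContinuousLinearMap.inl ℝ E ℝ) :=
        ((ContinuousLinearMap.compL ℝ E (E × ℝ) F).flip
          (ContinuousLinearMap.inl ℝ E ℝ)).continuous
      have h3 := h2.comp this
      rw [hF']
      simp only [hco]
      exact h3
    exact hc.aestronglyMeasurable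
  have hG : HasFDerivAt (fun y : E => ∫ s, f (y, s)) (∫ s, F' z s) z := by
    refine hasFDerivAt_integral_of_dominated_of_fderiv_le (𝕜 := ℝ) (Metric.ball_mem_nhds z one_pos)
      (Filter.Eventually.of_forall fun y => (cont_line f y).aestronglyMeasurable)
      (integrable_line f z) hF'int.aestronglyMeasurable
      (Filter.Eventually.of_forall fun s => fun y _ => hFbound y s)
      ((integrable_inv_one_add_sq).const_mul _)
      (Filter.Eventually.of_forall fun s => fun y _ => ?_)
    have h1 : HasFDerivAt (fun y : E => ((y, s) : E × ℝ))
        (ContinuousLinearMap.inl ℝ E ℝ) y := by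
      exact hasFDerivAt_prodMk_left y s
    exact ((f.differentiable (y, s)).hasFDerivAt).comp y h1
  have h0 : HasFDerivAt (fun y : E => ∫ s, f (y, s)) (0 : E →L[ℝ] F) z := by
    have he : (fun y : E => ∫ s, f (y, s)) = fun _ => (0 : F) := funext hf
    rw [he]; exact hasFDerivAt_const 0 z
  have hzero : (∫ s, F' z s) = 0 := hG.unique h0
  refine ContinuousLinearMap.ext fun v => ?_
  rw [ContinuousLinearMap.integral_apply hDint, ContinuousLinearMap.zero_apply]
  calc (∫ s, DzCLM f (z, s) v) = ∫ s, F' z s v.1 := by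
        refine integral_congr_ae (Filter.Eventually.of_forall fun s => ?_)
        simp [DzCLM_apply, hF']
    _ = (∫ s, F' z s) v.1 := (ContinuousLinearMap.integral_apply hF'int v.1).symm
    _ = 0 := by rw [hzero]; rfl

lemma main_decay : ∀ (n k : ℕ) (F : Type) [NormedAddCommGroup F] [NormedSpace ℝ F]
    [CompleteSpace F], ∃ (m : ℕ) (C : ℝ), 0 < C ∧ ∀ f : 𝓢(E × ℝ, F), VI f → ∀ x : E × ℝ,
      ‖x‖ ^ k * ‖iteratedFDeriv ℝ n (aI f) x‖ ≤ C * SN m f := by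
  intro n
  induction n with
  | zero =>
    intro k F _ _ _
    refine ⟨k + 2, π * 2 ^ (k + 2), by positivity, fun f hf x => ?_⟩
    have h := If_decay k f hf x
    rw [norm_iteratedFDeriv_zero]
    refine le_trans ?_ h
    have h1 : ‖x‖ ^ k ≤ (1 + ‖x‖) ^ k :=
      pow_le_pow_left₀ (norm_nonneg x) (by linarith [norm_nonneg x]) k
    exact mul_le_mul_of_nonneg_right h1 (norm_nonneg _)
  | succ n ih =>
    intro k F _ _ _
    obtain ⟨m₁, C₁, hC₁, h₁⟩ := ih k ((E × ℝ) →L[ℝ] F)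
    obtain ⟨m₂, C₂, hC₂, h₂⟩ := clm_bound (DzCLM (E := E) (F := F)) m₁
    obtain ⟨m₄, C₄, hC₄, h₄⟩ := clm_bound (KCLM (E := E) (F := F)) (max k n)
    refine ⟨max m₂ m₄, C₁ * C₂ + 2 ^ max k n * C₄, by positivity, fun f hf x => ?_⟩
    have hd1 : ContDiff ℝ n (aI (DzCLM f)) := contDiff_aI n _ (DzCLM f)
    have hd2 : ContDiff ℝ n ⇑(KCLM f) := (KCLM f).smooth n
    have hstep : ‖x‖ ^ k * ‖iteratedFDeriv ℝ (n + 1) (aI f) x‖ ≤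
        ‖x‖ ^ k * ‖iteratedFDeriv ℝ n (aI (DzCLM f)) x‖ +
        ‖x‖ ^ k * ‖iteratedFDeriv ℝ n (⇑(KCLM f)) x‖ := by
      rw [← norm_iteratedFDeriv_fderiv, fderiv_aI]
      have hfe : (fun w => aI (DzCLM f) w + (ContinuousLinearMap.snd ℝ E ℝ).smulRight (f w))
          = fun w => aI (DzCLM f) w + (KCLM f) w := funext fun w => by rw [KCLM_apply]
      rw [hfe]
      have hadd : iteratedFDeriv ℝ n (fun w => aI (DzCLM f) w + (KCLM f) w) x =
          iteratedFDeriv ℝ n (aI (DzCLM f)) x + iteratedFDeriv ℝ n (⇑(KCLM f)) x :=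
        iteratedFDeriv_add_apply hd1.contDiffAt hd2.contDiffAt
      rw [hadd, ← mul_add]
      exact mul_le_mul_of_nonneg_left (norm_add_le _ _) (by positivity)
    have hK : ‖x‖ ^ k * ‖iteratedFDeriv ℝ n (⇑(KCLM f)) x‖ ≤
        2 ^ max k n * SN (max k n) (KCLM f) := by
      refine le_trans ?_ (decay_SN (le_max_left k n) (le_max_right k n) (KCLM f) x)
      have h1 : ‖x‖ ^ k ≤ (1 + ‖x‖) ^ k :=
        pow_le_pow_left₀ (norm_nonneg x) (by linarith [norm_nonneg x]) k
      exact mul_le_mul_of_nonneg_right h1 (norm_nonneg _)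
    have hDz : ‖x‖ ^ k * ‖iteratedFDeriv ℝ n (aI (DzCLM f)) x‖ ≤ C₁ * SN m₁ (DzCLM f) :=
      h₁ (DzCLM f) (VI_DzCLM hf) x
    calc ‖x‖ ^ k * ‖iteratedFDeriv ℝ (n + 1) (aI f) x‖
        ≤ C₁ * SN m₁ (DzCLM f) + 2 ^ max k n * SN (max k n) (KCLM f) :=
          hstep.trans (add_le_add hDz hK)
      _ ≤ C₁ * (C₂ * SN m₂ f) + 2 ^ max k n * (C₄ * SN m₄ f) := by
          gcongr
          · exact h₂ f
          · exact h₄ f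
      _ ≤ (C₁ * C₂ + 2 ^ max k n * C₄) * SN (max m₂ m₄) f := by
          have hs1 : SN m₂ f ≤ SN (max m₂ m₄) f := SN_mono (le_max_left _ _) f
          have hs2 : SN m₄ f ≤ SN (max m₂ m₄) f := SN_mono (le_max_right _ _) f
          have hn1 : (0:ℝ) ≤ SN m₂ f := SN_nonneg _ _
          have hn2 : (0:ℝ) ≤ SN m₄ f := SN_nonneg _ _
          nlinarith [mul_le_mul_of_nonneg_left hs1 (mul_nonneg hC₁.le hC₂.le),
            mul_le_mul_of_nonneg_left hs2 (mul_nonneg (by positivity : (0:ℝ) ≤ (2:ℝ) ^ max k n) hC₄.le)]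

lemma snorm'_le_SN (p : ℕ) (f : 𝓢(E × ℝ, ℂ)) :
    (⨆ q : Fin (p + 1) × (E × ℝ), (1 + ‖q.2‖) ^ p * ‖iteratedFDeriv ℝ (q.1 : ℕ) (⇑f) q.2‖)
      ≤ 2 ^ p * SN p f :=
  ciSup_le fun q => decay_SN le_rfl (Fin.is_le q.1) f q.2

lemma snorm'_bdd (p : ℕ) (f : 𝓢(E × ℝ, ℂ)) :
    BddAbove (Set.range fun q : Fin (p + 1) × (E × ℝ) =>
      (1 + ‖q.2‖) ^ p * ‖iteratedFDeriv ℝ (q.1 : ℕ) (⇑f) q.2‖) := by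
  refine ⟨2 ^ p * SN p f, ?_⟩
  rintro y ⟨q, rfl⟩
  exact decay_SN le_rfl (Fin.is_le q.1) f q.2

lemma snorm'_nonneg (p : ℕ) (f : 𝓢(E × ℝ, ℂ)) :
    0 ≤ ⨆ q : Fin (p + 1) × (E × ℝ), (1 + ‖q.2‖) ^ p * ‖iteratedFDeriv ℝ (q.1 : ℕ) (⇑f) q.2‖ := by
  refine le_trans ?_ (le_ciSup (snorm'_bdd p f) (⟨0, 0⟩ : Fin (p + 1) × (E × ℝ)))
  positivity

lemma le_snorm' {q k n : ℕ} (hk : k ≤ q) (hn : n ≤ q) (h : 𝓢(E × ℝ, ℂ)) :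
    SchwartzMap.seminorm ℝ k n h ≤
      ⨆ m : Fin (q + 1) × (E × ℝ), (1 + ‖m.2‖) ^ q * ‖iteratedFDeriv ℝ (m.1 : ℕ) (⇑h) m.2‖ := by
  refine SchwartzMap.seminorm_le_bound ℝ k n h (snorm'_nonneg q h) fun x => ?_
  have h1 : ‖x‖ ^ k * ‖iteratedFDeriv ℝ n (⇑h) x‖ ≤
      (1 + ‖x‖) ^ q * ‖iteratedFDeriv ℝ n (⇑h) x‖ := by
    refine mul_le_mul_of_nonneg_right ?_ (norm_nonneg _)
    calc ‖x‖ ^ k ≤ (1 + ‖x‖) ^ k :=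
          pow_le_pow_left₀ (norm_nonneg x) (by linarith [norm_nonneg x]) k
      _ ≤ (1 + ‖x‖) ^ q := pow_le_pow_right₀ (by linarith [norm_nonneg x]) hk
  refine h1.trans ?_
  have := le_ciSup (snorm'_bdd q h) ((⟨n, by omega⟩ : Fin (q + 1)), x)
  simpa using this

lemma SN_le_snorm' (m : ℕ) (h : 𝓢(E × ℝ, ℂ)) :
    SN m h ≤ ((Finset.Iic (m, m)).card : ℝ) *
      ⨆ q : Fin (m + 1) × (E × ℝ), (1 + ‖q.2‖) ^ m * ‖iteratedFDeriv ℝ (q.1 : ℕ) (⇑h) q.2‖ := by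
  set S : ℝ := ⨆ q : Fin (m + 1) × (E × ℝ),
    (1 + ‖q.2‖) ^ m * ‖iteratedFDeriv ℝ (q.1 : ℕ) (⇑h) q.2‖ with hS
  have hterm : ∀ i ∈ Finset.Iic (m, m),
      (fun mm => SchwartzMap.seminorm ℝ mm.1 mm.2 (E := E × ℝ) (F := ℂ)) i h ≤ S := by
    intro i hi
    rw [Finset.mem_Iic, Prod.le_def] at hi
    exact le_snorm' hi.1 hi.2 h
  have hsup : SN m h ≤ S := by
    refine Seminorm.finset_sup_apply_le (snorm'_nonneg m h) fun i hi => hterm i hi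
  calc SN m h ≤ S := hsup
    _ = 1 * S := (one_mul S).symm
    _ ≤ ((Finset.Iic (m, m)).card : ℝ) * S := by
        refine mul_le_mul_of_nonneg_right ?_ (snorm'_nonneg m h)
        have : (1 : ℕ) ≤ (Finset.Iic (m, m)).card := Finset.card_pos.mpr ⟨(0,0), by simp⟩
        exact_mod_cast this
end Stmt12Aux

/-- The `p`-th Schwartz seminorm `‖f‖_{(p)} = sup_{x, |α| ≤ p} (1+|x|)^p |∂^α f(x)|`
(with derivatives of order `j ≤ p` measured by the iterated Fréchet derivative). -/
noncomputable def snorm' {W : Type*} [NormedAddCommGroup W] [NormedSpace ℝ W]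
    (p : ℕ) (f : W → ℂ) : ℝ :=
  ⨆ q : Fin (p + 1) × W, (1 + ‖q.2‖) ^ p * ‖iteratedFDeriv ℝ (q.1 : ℕ) f q.2‖

open Stmt12Aux in
/-- If `h ∈ 𝓢(ℝᵈ×ℝ)` has `∫_ℝ h(z,s) ds = 0` for every `z`, then
`f₁(z,t) = ∫_{-∞}^t h(z,s) ds` is again a Schwartz function, and for every `p` there are
`q` and `C > 0`, independent of `h`, with `‖f₁‖_{(p)} ≤ C ‖h‖_{(q)}`. -/
theorem stmt12 (d : ℕ) (p : ℕ) :
    ∃ (q : ℕ) (C : ℝ), 0 < C ∧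
      ∀ h : SchwartzMap (EuclideanSpace ℝ (Fin d) × ℝ) ℂ,
        (∀ z : EuclideanSpace ℝ (Fin d), (∫ s : ℝ, h (z, s)) = 0) →
        ∃ f₁ : SchwartzMap (EuclideanSpace ℝ (Fin d) × ℝ) ℂ,
          (∀ (z : EuclideanSpace ℝ (Fin d)) (t : ℝ),
            f₁ (z, t) = ∫ s in Set.Iic t, h (z, s)) ∧
          snorm' p ⇑f₁ ≤ C * snorm' q ⇑h := by
  set E := EuclideanSpace ℝ (Fin d) with hE
  have H : ∀ kn : ℕ × ℕ, ∃ (m : ℕ) (C : ℝ), 0 < C ∧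
      ∀ f : 𝓢(E × ℝ, ℂ), VI f → ∀ x : E × ℝ,
        ‖x‖ ^ kn.1 * ‖iteratedFDeriv ℝ kn.2 (aI f) x‖ ≤ C * SN m f :=
    fun kn => main_decay kn.2 kn.1 ℂ
  choose mfun Cfun hCpos hbound using H
  set M : ℕ := (Finset.Iic (p, p)).sup mfun with hM
  set CC : ℝ := ∑ kn ∈ Finset.Iic (p, p), Cfun kn with hCC
  have hCCpos : 0 < CC := by
    rw [hCC]
    refine Finset.sum_pos (fun kn _ => hCpos kn) ⟨(0, 0), by simp⟩
  set Cbig : ℝ := 2 ^ p * CC * ((Finset.Iic (M, M)).card : ℝ) with hCbig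
  have hcardpos : (0 : ℝ) < ((Finset.Iic (M, M)).card : ℝ) := by
    have : (1 : ℕ) ≤ (Finset.Iic (M, M)).card := Finset.card_pos.mpr ⟨(0, 0), by simp⟩
    exact_mod_cast this
  refine ⟨M, Cbig, by positivity, fun h hVI => ?_⟩
  have hVI' : VI h := hVI
  set f₁ : 𝓢(E × ℝ, ℂ) :=
    { toFun := aI h
      smooth' := contDiff_infty.mpr fun n => contDiff_aI n ℂ h
      decay' := by
        intro k n
        exact ⟨Cfun (k, n) * SN (mfun (k, n)) h, fun x => hbound (k, n) h hVI' x⟩ } with hf₁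
  have hcoe : ⇑f₁ = aI h := rfl
  refine ⟨f₁, fun z t => rfl, ?_⟩
  have hsem : ∀ kn : ℕ × ℕ, kn ∈ Finset.Iic (p, p) →
      SchwartzMap.seminorm ℝ kn.1 kn.2 f₁ ≤ CC * SN M h := by
    intro kn hkn
    have h1 : SchwartzMap.seminorm ℝ kn.1 kn.2 f₁ ≤ Cfun kn * SN (mfun kn) h := by
      refine SchwartzMap.seminorm_le_bound ℝ kn.1 kn.2 f₁
        (mul_nonneg (hCpos kn).le (SN_nonneg _ _)) fun x => ?_
      rw [hcoe]
      exact hbound kn h hVI' x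
    refine h1.trans ?_
    have h2 : SN (mfun kn) h ≤ SN M h := SN_mono (Finset.le_sup hkn) h
    have h3 : Cfun kn ≤ CC := by
      rw [hCC]
      exact Finset.single_le_sum (fun i _ => (hCpos i).le) hkn
    have := SN_nonneg (mfun kn) h
    nlinarith [SN_nonneg M h]
  have hSNp : SN p f₁ ≤ CC * SN M h := by
    refine Seminorm.finset_sup_apply_le (mul_nonneg hCCpos.le (SN_nonneg M h)) fun i hi =>
      hsem i hi
  calc snorm' p ⇑f₁ ≤ 2 ^ p * SN p f₁ := snorm'_le_SN p f₁
    _ ≤ 2 ^ p * (CC * SN M h) := by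
        exact mul_le_mul_of_nonneg_left hSNp (by positivity)
    _ ≤ 2 ^ p * (CC * (((Finset.Iic (M, M)).card : ℝ) * snorm' M ⇑h)) := by
        refine mul_le_mul_of_nonneg_left (mul_le_mul_of_nonneg_left ?_ hCCpos.le) (by positivity)
        exact SN_le_snorm' M h
    _ = Cbig * snorm' M ⇑h := by rw [hCbig]; ring
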